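/- Let q ∈ [1,∞], K ≥ 1, n₁,…,n_K > 0, λ₁, λ₂ ≥ 0, let S¹,…,Sᴷ be symmetric p×p real matrices, let (I₁,…,I_L) be a partition of {1,…,p}, and let T = ∪_{l=1}^L I_l × I_l. If n_k|Sᵏ_{ij}| ≤ λ₁ for all (i,j) ∈ T^c and all k = 1,…,K, then every K-tuple (Θ̂¹,…,Θ̂ᴷ) of symmetric positive definite p×p matrices minimizing the CNJGL objective F(Θ¹,…,Θᴷ) = Σ_{k=1}^K n_k(−log det Θᵏ + trace(SᵏΘᵏ)) + λ₁ Σ_{k=1}^K Σ_{i,j}|Θᵏ_{ij}| + λ₂ Ω_q(Θ¹ − diag(Θ¹),…,Θᴷ − diag(Θᴷ)) over all K-tuples of symmetric positive definite matrices has the property that each Θ̂ᵏ is supported on T. -/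

import Mathlib

open Matrix
open scoped ENNReal BigOperators

/-- The ℓ_q norm of a finitely-indexed real vector, for q ∈ [0,∞]
(the maximum absolute entry when q = ∞). -/
noncomputable def lqNorm (q : ℝ≥0∞) {ι : Type*} [Fintype ι] (x : ι → ℝ) : ℝ :=
  ‖(WithLp.equiv q (ι → ℝ)).symm x‖

/-- The row-column overlap norm Ω_q of a K-tuple of p×p real matrices:
the infimum of Σ_j ‖([V¹;…;Vᴷ])_j‖_q over all decompositions Θᵏ = Vᵏ + (Vᵏ)ᵀ. -/
noncomputable def rcon (q : ℝ≥0∞) (K p : ℕ)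
    (Θ : Fin K → Matrix (Fin p) (Fin p) ℝ) : ℝ :=
  sInf { r : ℝ | ∃ V : Fin K → Matrix (Fin p) (Fin p) ℝ,
    (∀ k, Θ k = V k + (V k)ᵀ) ∧
    r = ∑ j : Fin p, lqNorm q (fun ki : Fin K × Fin p => V ki.1 ki.2 j) }

/-- The row-column overlap norm Ω_q of a single p×p matrix (the case K = 1). -/
noncomputable def rcon1 (q : ℝ≥0∞) {p : ℕ} (Θ : Matrix (Fin p) (Fin p) ℝ) : ℝ :=
  sInf { r : ℝ | ∃ V : Matrix (Fin p) (Fin p) ℝ,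
    Θ = V + Vᵀ ∧ r = ∑ j : Fin p, lqNorm q (fun i => V i j) }

/-- The CNJGL objective for K precision matrices:
Σ_k n_k(−log det Θᵏ + trace(SᵏΘᵏ)) + λ₁ Σ_k Σ_{i,j}|Θᵏ_{ij}|
  + λ₂ Ω_q(Θ¹ − diag(Θ¹),…,Θᴷ − diag(Θᴷ)). -/
noncomputable def cnjglObj {K p : ℕ} (q : ℝ≥0∞) (n : Fin K → ℝ)
    (lam₁ lam₂ : ℝ) (S : Fin K → Matrix (Fin p) (Fin p) ℝ)
    (Θ : Fin K → Matrix (Fin p) (Fin p) ℝ) : ℝ :=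
  (∑ k : Fin K, n k * (-Real.log (Θ k).det + (S k * Θ k).trace))
    + lam₁ * (∑ k : Fin K, ∑ i : Fin p, ∑ j : Fin p, |Θ k i j|)
    + lam₂ * rcon q K p (fun k => Θ k - Matrix.diagonal fun i => Θ k i i)


-- ========================= auxiliary material =========================

open scoped Classical

lemma lqNorm_nonneg' {q : ℝ≥0∞} (hq : 1 ≤ q) {ι : Type*} [Fintype ι] (x : ι → ℝ) :
    0 ≤ lqNorm q x := by
  have : Fact (1 ≤ q) := ⟨hq⟩
  exact norm_nonneg _

lemma lqNorm_mono {q : ℝ≥0∞} (hq : 1 ≤ q) {ι : Type*} [Fintype ι] {x y : ι → ℝ}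
    (h : ∀ i, |x i| ≤ |y i|) : lqNorm q x ≤ lqNorm q y := by
  unfold lqNorm
  by_cases hq' : q = ∞
  · subst hq'
    rw [PiLp.norm_eq_ciSup, PiLp.norm_eq_ciSup]
    cases isEmpty_or_nonempty ι
    · simp
    · apply ciSup_mono (Set.Finite.bddAbove (Set.finite_range _))
      intro i
      simpa [WithLp.equiv_symm_apply, Real.norm_eq_abs] using h i
  · have hq0 : 0 < q.toReal := ENNReal.toReal_pos (fun hc => by simp [hc] at hq) hq'
    rw [PiLp.norm_eq_sum hq0, PiLp.norm_eq_sum hq0]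
    apply Real.rpow_le_rpow
    · positivity
    · apply Finset.sum_le_sum
      intro i _
      apply Real.rpow_le_rpow (norm_nonneg _) _ hq0.le
      simpa [WithLp.equiv_symm_apply, Real.norm_eq_abs] using h i
    · positivity

lemma eigen_trace {m : ℕ} {A : Matrix (Fin m) (Fin m) ℝ} (hA : A.IsHermitian) :
    A.trace = ∑ i, hA.eigenvalues i := by
  conv_lhs => rw [hA.spectral_theorem, Unitary.conjStarAlgAut_apply]
  rw [Matrix.trace_mul_comm, ← Matrix.mul_assoc]
  rw [(Matrix.mem_unitaryGroup_iff').mp (Matrix.IsHermitian.eigenvectorUnitary hA).2, one_mul]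
  simp [Matrix.trace_diagonal]

open scoped MatrixOrder in
lemma logdet_le {m : ℕ} {A B : Matrix (Fin m) (Fin m) ℝ} (hA : A.PosDef) (hB : B.PosDef)
    (htr : (A * B⁻¹).trace = m) :
    Real.log A.det ≤ Real.log B.det ∧ (Real.log B.det ≤ Real.log A.det → A = B) := by
  have hBdet : B.det ≠ 0 := hB.det_pos.ne'
  have hBinv : (B⁻¹).PosDef := hB.inv
  set R : Matrix (Fin m) (Fin m) ℝ := CFC.sqrt (B⁻¹) with hRdef
  have hRR : R * R = B⁻¹ := CFC.sqrt_mul_sqrt_self _ hBinv.posSemidef.nonneg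
  have hRherm : R.IsHermitian := (Matrix.nonneg_iff_posSemidef.mp (CFC.sqrt_nonneg _)).1
  have hRdet : R.det ≠ 0 := by
    intro h
    have : (B⁻¹).det = 0 := by rw [← hRR, Matrix.det_mul, h, mul_zero]
    rw [Matrix.det_nonsing_inv] at this
    simp [Ring.inverse_eq_inv'] at this
    exact hBdet this
  set M : Matrix (Fin m) (Fin m) ℝ := R * A * R with hMdef
  have hMpsd : M.PosSemidef := by
    have := hA.posSemidef.conjTranspose_mul_mul_same R
    rwa [hRherm.eq] at this
  have hMdet : M.det = A.det * B.det⁻¹ := by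
    rw [hMdef, Matrix.det_mul, Matrix.det_mul]
    have : R.det * R.det = (B⁻¹).det := by rw [← Matrix.det_mul, hRR]
    rw [Matrix.det_nonsing_inv, Ring.inverse_eq_inv'] at this
    calc R.det * A.det * R.det = A.det * (R.det * R.det) := by ring
    _ = A.det * B.det⁻¹ := by rw [this]
  have hMtr : M.trace = m := by
    rw [hMdef, Matrix.trace_mul_comm, ← Matrix.mul_assoc, hRR, Matrix.trace_mul_comm, htr]
  have hMdetpos : 0 < M.det := by
    rw [hMdet]
    exact mul_pos hA.det_pos (inv_pos.mpr hB.det_pos)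
  set μ := hMpsd.1.eigenvalues with hμdef
  have hprod : ∏ i, μ i = M.det := by
    rw [hMpsd.1.det_eq_prod_eigenvalues]
    norm_num
    rfl
  have hsum : ∑ i, μ i = m := by rw [← eigen_trace hMpsd.1, hMtr]
  have hμpos : ∀ i, 0 < μ i := by
    intro i
    rcases lt_or_eq_of_le (hMpsd.eigenvalues_nonneg i) with h | h
    · exact h
    · exfalso
      have : ∏ i, μ i = 0 := Finset.prod_eq_zero (Finset.mem_univ i) h.symm
      rw [hprod] at this; exact hMdetpos.ne' this
  have hlogM : Real.log M.det = Real.log A.det - Real.log B.det := by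
    rw [hMdet, Real.log_mul hA.det_pos.ne' (inv_ne_zero hBdet), Real.log_inv, sub_eq_add_neg]
  have hlogsum : Real.log M.det = ∑ i, Real.log (μ i) := by
    rw [← hprod, Real.log_prod]
    intro i _
    exact (hμpos i).ne'
  have hle : Real.log M.det ≤ 0 := by
    rw [hlogsum]
    calc ∑ i, Real.log (μ i) ≤ ∑ i, (μ i - 1) :=
      Finset.sum_le_sum fun i _ => Real.log_le_sub_one_of_pos (hμpos i)
    _ = 0 := by rw [Finset.sum_sub_distrib, hsum]; simp
  constructor
  · linarith [hle, hlogM.symm.trans_le hle]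
  · intro heq
    have hzero : Real.log M.det = 0 := by rw [hlogM]; linarith [hle, hlogM ▸ hle]
    have hterm : ∀ i, μ i = 1 := by
      intro i
      by_contra hne
      have hstrict : Real.log (μ i) < μ i - 1 := Real.log_lt_sub_one_of_pos (hμpos i) hne
      have : ∑ j, Real.log (μ j) < ∑ j, (μ j - 1) := by
        apply Finset.sum_lt_sum (fun j _ => Real.log_le_sub_one_of_pos (hμpos j))
        exact ⟨i, Finset.mem_univ i, hstrict⟩
      rw [← hlogsum, hzero, Finset.sum_sub_distrib, hsum] at this
      simp at this
    have hMone : M = 1 := by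
      have := hMpsd.1.spectral_theorem
      rw [this, Unitary.conjStarAlgAut_apply]
      have hdiag : Matrix.diagonal (RCLike.ofReal ∘ hMpsd.1.eigenvalues)
          = (1 : Matrix (Fin m) (Fin m) ℝ) := by
        ext i j
        by_cases h : i = j
        · subst h; simp [Matrix.diagonal_apply_eq, Matrix.one_apply_eq]
          exact hterm i
        · simp [Matrix.diagonal_apply_ne _ h, Matrix.one_apply_ne h]
      rw [hdiag, mul_one]
      exact (Matrix.mem_unitaryGroup_iff).mp (Matrix.IsHermitian.eigenvectorUnitary hMpsd.1).2
    have hRunit : IsUnit R.det := hRdet.isUnit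
    have hA' : A = R⁻¹ * R⁻¹ := by
      have h1 : R⁻¹ * (R * A * R) * R⁻¹ = R⁻¹ * R⁻¹ := by rw [← hMdef, hMone, mul_one]
      calc A = (R⁻¹ * R) * A * (R * R⁻¹) := by
            rw [Matrix.nonsing_inv_mul _ hRunit, Matrix.mul_nonsing_inv _ hRunit, one_mul, mul_one]
      _ = R⁻¹ * (R * A * R) * R⁻¹ := by noncomm_ring
      _ = R⁻¹ * R⁻¹ := h1
    rw [hA', ← Matrix.mul_inv_rev, hRR,
      Matrix.nonsing_inv_nonsing_inv _ (isUnit_iff_ne_zero.mpr hBdet)]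

/-- truncation of a matrix to the block-diagonal support determined by `I`. -/
noncomputable def trunc {p L : ℕ} (I : Fin L → Finset (Fin p))
    (M : Matrix (Fin p) (Fin p) ℝ) : Matrix (Fin p) (Fin p) ℝ :=
  Matrix.of fun i j => if ∃ l, i ∈ I l ∧ j ∈ I l then M i j else 0

section Trunc
variable {p L : ℕ} {I : Fin L → Finset (Fin p)}

lemma trunc_apply (M : Matrix (Fin p) (Fin p) ℝ) (i j : Fin p) :
    trunc I M i j = if ∃ l, i ∈ I l ∧ j ∈ I l then M i j else 0 := rfl

lemma P_symm {i j : Fin p} (h : ∃ l, i ∈ I l ∧ j ∈ I l) : ∃ l, j ∈ I l ∧ i ∈ I l := by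
  obtain ⟨l, h1, h2⟩ := h; exact ⟨l, h2, h1⟩

variable (hpart : ∀ i : Fin p, ∃! l, i ∈ I l)
include hpart

lemma sum_ind (i j : Fin p) (c : ℝ) :
    ∑ l, (if i ∈ I l ∧ j ∈ I l then c else 0) = if ∃ l, i ∈ I l ∧ j ∈ I l then c else 0 := by
  by_cases h : ∃ l, i ∈ I l ∧ j ∈ I l
  · obtain ⟨l₀, hl₀⟩ := h
    rw [if_pos ⟨l₀, hl₀⟩, Finset.sum_eq_single l₀]
    · rw [if_pos hl₀]
    · intro l _ hne
      rw [if_neg]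
      rintro ⟨hi, -⟩
      obtain ⟨l', -, huniq⟩ := hpart i
      exact hne ((huniq l hi).trans (huniq l₀ hl₀.1).symm)
    · intro h; exact absurd (Finset.mem_univ l₀) h
  · rw [if_neg h, Finset.sum_eq_zero]
    intro l _
    rw [if_neg]
    rintro ⟨hi, hj⟩
    exact h ⟨l, hi, hj⟩

lemma trunc_posDef {Θ : Matrix (Fin p) (Fin p) ℝ} (hΘ : Θ.PosDef) : (trunc I Θ).PosDef := by
  rw [Matrix.posDef_iff_dotProduct_mulVec]
  constructor
  · ext i j
    simp only [Matrix.conjTranspose_apply, trunc_apply, star_trivial]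
    by_cases h : ∃ l, i ∈ I l ∧ j ∈ I l
    · rw [if_pos (P_symm h), if_pos h]
      have := hΘ.1
      calc Θ j i = Θᴴ i j := rfl
      _ = Θ i j := by rw [this]
    · rw [if_neg (fun hc => h (P_symm hc)), if_neg h]
  · intro x hx
    have expand : ∀ (N : Matrix (Fin p) (Fin p) ℝ) (y z : Fin p → ℝ),
        y ⬝ᵥ N *ᵥ z = ∑ i, ∑ j, y i * (N i j * z j) := by
      intro N y z
      simp [dotProduct, Matrix.mulVec, Finset.mul_sum]
    set xl : Fin L → Fin p → ℝ := fun l i => if i ∈ I l then x i else 0 with hxl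
    have key : star x ⬝ᵥ (trunc I Θ) *ᵥ x = ∑ l, (xl l) ⬝ᵥ Θ *ᵥ (xl l) := by
      rw [star_trivial, expand]
      have : ∀ i j : Fin p, x i * (trunc I Θ i j * x j)
          = ∑ l, (if i ∈ I l ∧ j ∈ I l then x i * (Θ i j * x j) else 0) := by
        intro i j
        rw [sum_ind hpart, trunc_apply]
        by_cases h : ∃ l, i ∈ I l ∧ j ∈ I l <;> simp [h]
      simp_rw [this]
      have swap : ∀ (f : Fin p → Fin p → Fin L → ℝ),
          ∑ i, ∑ j, ∑ l, f i j l = ∑ l, ∑ i, ∑ j, f i j l := by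
        intro f
        have h1 : ∀ i : Fin p, ∑ j, ∑ l, f i j l = ∑ l, ∑ j, f i j l :=
          fun i => Finset.sum_comm
        simp_rw [h1]
        exact Finset.sum_comm
      rw [swap]
      apply Finset.sum_congr rfl
      intro l _
      rw [expand]
      apply Finset.sum_congr rfl
      intro i _
      apply Finset.sum_congr rfl
      intro j _
      by_cases ha : i ∈ I l <;> by_cases hb : j ∈ I l <;> simp [hxl, ha, hb]
    rw [key]
    have hnonneg : ∀ l, 0 ≤ (xl l) ⬝ᵥ Θ *ᵥ (xl l) := by
      intro l
      have := hΘ.posSemidef.dotProduct_mulVec_nonneg (xl l)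
      rwa [star_trivial] at this
    obtain ⟨i₀, hi₀⟩ : ∃ i, x i ≠ 0 := Function.ne_iff.mp hx
    obtain ⟨l₀, hl₀, -⟩ := hpart i₀
    have hxl₀ : xl l₀ ≠ 0 := by
      intro hc
      have : xl l₀ i₀ = 0 := by rw [hc]; rfl
      rw [hxl] at this
      simp only [if_pos hl₀] at this
      exact hi₀ this
    apply Finset.sum_pos' (fun l _ => hnonneg l) ⟨l₀, Finset.mem_univ l₀, ?_⟩
    have := hΘ.dotProduct_mulVec_pos hxl₀
    rwa [star_trivial] at this

lemma trunc_comm_diag {Θ : Matrix (Fin p) (Fin p) ℝ} (l : Fin L) :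
    Matrix.diagonal (fun i => if i ∈ I l then (1:ℝ) else 0) * trunc I Θ
      = trunc I Θ * Matrix.diagonal (fun i => if i ∈ I l then (1:ℝ) else 0) := by
  ext i j
  rw [Matrix.diagonal_mul, Matrix.mul_diagonal]
  by_cases hP : ∃ l', i ∈ I l' ∧ j ∈ I l'
  · obtain ⟨l', hi', hj'⟩ := hP
    obtain ⟨l₁, -, huniq⟩ := hpart i
    obtain ⟨l₂, -, huniq₂⟩ := hpart j
    by_cases hl : i ∈ I l
    · have : l = l' := (huniq l hl).trans (huniq l' hi').symm
      rw [if_pos hl, if_pos (this ▸ hj')]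
      ring
    · rw [if_neg hl, if_neg]
      · ring
      · intro hjl
        exact hl (((huniq₂ l hjl).trans (huniq₂ l' hj').symm) ▸ hi')
  · rw [trunc_apply, if_neg hP]
    ring

lemma trunc_inv_support {Θ : Matrix (Fin p) (Fin p) ℝ} (hΘ : Θ.PosDef)
    {i j : Fin p} (h : ¬ ∃ l, i ∈ I l ∧ j ∈ I l) : (trunc I Θ)⁻¹ i j = 0 := by
  have hPD := trunc_posDef hpart hΘ
  have hdet : IsUnit (trunc I Θ).det := hPD.det_pos.ne'.isUnit
  have h1 : trunc I Θ * (trunc I Θ)⁻¹ = 1 := Matrix.mul_nonsing_inv _ hdet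
  have h2 : (trunc I Θ)⁻¹ * trunc I Θ = 1 := Matrix.nonsing_inv_mul _ hdet
  obtain ⟨l₀, hl₀, -⟩ := hpart i
  set D := Matrix.diagonal (fun i => if i ∈ I l₀ then (1:ℝ) else 0) with hD
  have hcomm : D * (trunc I Θ)⁻¹ = (trunc I Θ)⁻¹ * D := by
    calc D * (trunc I Θ)⁻¹ = ((trunc I Θ)⁻¹ * trunc I Θ) * D * (trunc I Θ)⁻¹ := by
          rw [h2, one_mul]
    _ = (trunc I Θ)⁻¹ * (D * trunc I Θ) * (trunc I Θ)⁻¹ := by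
          rw [trunc_comm_diag hpart]; noncomm_ring
    _ = (trunc I Θ)⁻¹ * D * (trunc I Θ * (trunc I Θ)⁻¹) := by noncomm_ring
    _ = (trunc I Θ)⁻¹ * D := by rw [h1, mul_one]
  have := congrFun (congrFun hcomm i) j
  rw [hD, Matrix.diagonal_mul, Matrix.mul_diagonal] at this
  rw [if_pos hl₀, one_mul] at this
  rw [this, if_neg, mul_zero]
  intro hjl₀
  exact h ⟨l₀, hl₀, hjl₀⟩

lemma trunc_trace {Θ : Matrix (Fin p) (Fin p) ℝ} (hΘ : Θ.PosDef) :
    (Θ * (trunc I Θ)⁻¹).trace = p := by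
  have hdet : IsUnit (trunc I Θ).det := (trunc_posDef hpart hΘ).det_pos.ne'.isUnit
  have key : (Θ * (trunc I Θ)⁻¹).trace = (trunc I Θ * (trunc I Θ)⁻¹).trace := by
    rw [Matrix.trace, Matrix.trace]
    apply Finset.sum_congr rfl
    intro i _
    rw [Matrix.diag_apply, Matrix.diag_apply, Matrix.mul_apply, Matrix.mul_apply]
    apply Finset.sum_congr rfl
    intro k _
    by_cases hP : ∃ l, i ∈ I l ∧ k ∈ I l
    · rw [trunc_apply, if_pos hP]
    · rw [trunc_apply, if_neg hP, zero_mul,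
        trunc_inv_support hpart hΘ (fun hc => hP (P_symm hc)), mul_zero]
  rw [key, Matrix.mul_nonsing_inv _ hdet, Matrix.trace_one]
  simp

lemma trunc_sub_diag (M : Matrix (Fin p) (Fin p) ℝ) :
    trunc I M - Matrix.diagonal (fun i => trunc I M i i)
      = trunc I (M - Matrix.diagonal fun i => M i i) := by
  ext i j
  simp only [Matrix.sub_apply, trunc_apply]
  by_cases hij : i = j
  · subst hij
    have hP : ∃ l, i ∈ I l ∧ i ∈ I l := by
      obtain ⟨l, hl, -⟩ := hpart i; exact ⟨l, hl, hl⟩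
    simp [hP]
  · by_cases hP : ∃ l, i ∈ I l ∧ j ∈ I l <;>
      simp [hP, Matrix.diagonal_apply_ne _ hij]

end Trunc

lemma rcon_trunc_le {K p L : ℕ} (q : ℝ≥0∞) (hq : 1 ≤ q) (I : Fin L → Finset (Fin p))
    (Ψ : Fin K → Matrix (Fin p) (Fin p) ℝ) (hΨ : ∀ k, (Ψ k)ᵀ = Ψ k) :
    rcon q K p (fun k => trunc I (Ψ k)) ≤ rcon q K p Ψ := by
  have hbdd : BddBelow { r : ℝ | ∃ V : Fin K → Matrix (Fin p) (Fin p) ℝ,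
      (∀ k, trunc I (Ψ k) = V k + (V k)ᵀ) ∧
      r = ∑ j : Fin p, lqNorm q (fun ki : Fin K × Fin p => V ki.1 ki.2 j) } := by
    refine ⟨0, ?_⟩
    rintro r ⟨V, -, rfl⟩
    exact Finset.sum_nonneg fun j _ => lqNorm_nonneg' hq _
  apply le_csInf
  · refine ⟨_, fun k => (1/2 : ℝ) • Ψ k, fun k => ?_, rfl⟩
    rw [Matrix.transpose_smul, hΨ k, ← two_smul ℝ ((1/2 : ℝ) • Ψ k), smul_smul]
    norm_num
  · rintro r ⟨V, hV, rfl⟩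
    calc rcon q K p (fun k => trunc I (Ψ k))
        ≤ ∑ j : Fin p, lqNorm q (fun ki : Fin K × Fin p => trunc I (V ki.1) ki.2 j) := by
          apply csInf_le hbdd
          refine ⟨fun k => trunc I (V k), fun k => ?_, rfl⟩
          ext i j
          have hVij := congrFun (congrFun (hV k) i) j
          simp only [Matrix.add_apply, Matrix.transpose_apply] at hVij ⊢
          rw [trunc_apply, trunc_apply, trunc_apply]
          by_cases hP : ∃ l, i ∈ I l ∧ j ∈ I l
          · rw [if_pos hP, if_pos hP, if_pos (P_symm hP), hVij]
          · rw [if_neg hP, if_neg hP, if_neg (fun hc => hP (P_symm hc)), add_zero]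
    _ ≤ ∑ j : Fin p, lqNorm q (fun ki : Fin K × Fin p => V ki.1 ki.2 j) := by
          apply Finset.sum_le_sum
          intro j _
          apply lqNorm_mono hq
          intro ki
          rw [trunc_apply]
          by_cases hP : ∃ l, ki.2 ∈ I l ∧ j ∈ I l
          · rw [if_pos hP]
          · rw [if_neg hP]; simp

/-- Theorem 5, sufficient condition for CNJGL: if
n_k|Sᵏ_{ij}| ≤ λ₁ for all (i,j) ∈ T^c and all k, where T = ∪_l I_l × I_l for a
partition (I_l), then every K-tuple of symmetric positive definite matrices
minimizing the CNJGL objective is supported on T. -/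
theorem cnjgl_sufficient (K p L : ℕ) (hK : 1 ≤ K) (q : ℝ≥0∞) (hq : 1 ≤ q)
    (n : Fin K → ℝ) (hn : ∀ k, 0 < n k)
    (lam₁ lam₂ : ℝ) (hlam₁ : 0 ≤ lam₁) (hlam₂ : 0 ≤ lam₂)
    (S : Fin K → Matrix (Fin p) (Fin p) ℝ) (hS : ∀ k, (S k).IsSymm)
    (I : Fin L → Finset (Fin p)) (hpart : ∀ i : Fin p, ∃! l, i ∈ I l)
    (hcond : ∀ k, ∀ i j : Fin p, ¬ (∃ l, i ∈ I l ∧ j ∈ I l) →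
      n k * |S k i j| ≤ lam₁)
    (Θ : Fin K → Matrix (Fin p) (Fin p) ℝ) (hΘ : ∀ k, (Θ k).PosDef)
    (hmin : ∀ Ψ : Fin K → Matrix (Fin p) (Fin p) ℝ, (∀ k, (Ψ k).PosDef) →
      cnjglObj q n lam₁ lam₂ S Θ ≤ cnjglObj q n lam₁ lam₂ S Ψ) :
    ∀ k, ∀ i j : Fin p, ¬ (∃ l, i ∈ I l ∧ j ∈ I l) → Θ k i j = 0 := by
  classical
  -- the block-diagonal truncations
  set Θt : Fin K → Matrix (Fin p) (Fin p) ℝ := fun k => trunc I (Θ k) with hΘt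
  have hΘtPD : ∀ k, (Θt k).PosDef := fun k => trunc_posDef hpart (hΘ k)
  have hlog : ∀ k, Real.log (Θ k).det ≤ Real.log (Θt k).det ∧
      (Real.log (Θt k).det ≤ Real.log (Θ k).det → Θ k = Θt k) :=
    fun k => logdet_le (hΘ k) (hΘtPD k) (trunc_trace hpart (hΘ k))
  have hsymmΘ : ∀ k, (Θ k)ᵀ = Θ k := by
    intro k
    ext i j
    have := (hΘ k).1.apply i j
    rwa [star_trivial] at this
  -- RCON comparison
  have hrcon : rcon q K p (fun k => Θt k - Matrix.diagonal fun i => Θt k i i)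
      ≤ rcon q K p (fun k => Θ k - Matrix.diagonal fun i => Θ k i i) := by
    have hfun : (fun k => Θt k - Matrix.diagonal fun i => Θt k i i)
        = fun k => trunc I (Θ k - Matrix.diagonal fun i => Θ k i i) :=
      funext fun k => trunc_sub_diag hpart (Θ k)
    rw [hfun]
    apply rcon_trunc_le q hq I
    intro k
    rw [Matrix.transpose_sub, hsymmΘ k, Matrix.diagonal_transpose]
  -- trace + ℓ1 comparison, per k
  have htl : ∀ k, n k * (S k * Θt k).trace + lam₁ * (∑ i, ∑ j, |Θt k i j|)
      ≤ n k * (S k * Θ k).trace + lam₁ * (∑ i, ∑ j, |Θ k i j|) := by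
    intro k
    have htr : ∀ (M : Matrix (Fin p) (Fin p) ℝ),
        (S k * M).trace = ∑ i, ∑ j, S k i j * M j i := by
      intro M
      rw [Matrix.trace]
      apply Finset.sum_congr rfl
      intro i _
      rw [Matrix.diag_apply, Matrix.mul_apply]
    rw [htr, htr, Finset.mul_sum, Finset.mul_sum, Finset.mul_sum, Finset.mul_sum,
      ← Finset.sum_add_distrib, ← Finset.sum_add_distrib]
    apply Finset.sum_le_sum
    intro i _
    rw [Finset.mul_sum, Finset.mul_sum, Finset.mul_sum, Finset.mul_sum,
      ← Finset.sum_add_distrib, ← Finset.sum_add_distrib]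
    apply Finset.sum_le_sum
    intro j _
    have hsym_entry : Θ k j i = Θ k i j := by
      have := congrFun (congrFun (hsymmΘ k) j) i
      rw [Matrix.transpose_apply] at this
      exact this.symm
    by_cases hP : ∃ l, j ∈ I l ∧ i ∈ I l
    · rw [show Θt k j i = Θ k j i from by rw [hΘt]; exact if_pos hP,
        show Θt k i j = Θ k i j from by rw [hΘt]; exact if_pos (P_symm hP)]
    · have hzero : Θt k j i = 0 := by rw [hΘt]; exact if_neg hP
      have hzero' : Θt k i j = 0 := by rw [hΘt]; exact if_neg (fun hc => hP (P_symm hc))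
      rw [hzero, hzero', hsym_entry]
      have hc := hcond k i j (fun hc => hP (P_symm hc))
      have h1 : -(n k * |S k i j|) * |Θ k i j| ≤ n k * (S k i j * Θ k i j) := by
        have := neg_abs_le (S k i j * Θ k i j)
        rw [abs_mul] at this
        nlinarith [(hn k).le, abs_nonneg (S k i j), abs_nonneg (Θ k i j)]
      have h2 : -(n k * |S k i j|) * |Θ k i j| ≥ -lam₁ * |Θ k i j| := by
        nlinarith [abs_nonneg (Θ k i j)]
      simp only [mul_zero, abs_zero, add_zero]
      nlinarith [abs_nonneg (Θ k i j)]
  -- grouped form of the objective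
  have expand : ∀ Ψ : Fin K → Matrix (Fin p) (Fin p) ℝ,
      cnjglObj q n lam₁ lam₂ S Ψ
        = (∑ k : Fin K, (n k * (-Real.log (Ψ k).det + (S k * Ψ k).trace)
            + lam₁ * ∑ i, ∑ j, |Ψ k i j|))
          + lam₂ * rcon q K p (fun k => Ψ k - Matrix.diagonal fun i => Ψ k i i) := by
    intro Ψ
    rw [cnjglObj, Finset.sum_add_distrib, ← Finset.mul_sum]
  -- the key inequality
  have hd : ∀ k, 0 ≤ n k * (Real.log (Θt k).det - Real.log (Θ k).det) := by
    intro k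
    have := (hlog k).1
    nlinarith [(hn k).le]
  have key : cnjglObj q n lam₁ lam₂ S Θt
      + ∑ k : Fin K, n k * (Real.log (Θt k).det - Real.log (Θ k).det)
      ≤ cnjglObj q n lam₁ lam₂ S Θ := by
    rw [expand Θt, expand Θ]
    have hsum : (∑ k : Fin K, (n k * (-Real.log (Θt k).det + (S k * Θt k).trace)
          + lam₁ * ∑ i, ∑ j, |Θt k i j|))
        + ∑ k : Fin K, n k * (Real.log (Θt k).det - Real.log (Θ k).det)
        ≤ ∑ k : Fin K, (n k * (-Real.log (Θ k).det + (S k * Θ k).trace)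
          + lam₁ * ∑ i, ∑ j, |Θ k i j|) := by
      rw [← Finset.sum_add_distrib]
      apply Finset.sum_le_sum
      intro k _
      have := htl k
      ring_nf
      ring_nf at this
      linarith
    have hr2 := mul_le_mul_of_nonneg_left hrcon hlam₂
    linarith
  have hmin' := hmin Θt hΘtPD
  have hsum0 : ∑ k : Fin K, n k * (Real.log (Θt k).det - Real.log (Θ k).det) ≤ 0 := by
    linarith
  have hallzero : ∀ k, n k * (Real.log (Θt k).det - Real.log (Θ k).det) = 0 := by
    intro k
    have := (Finset.sum_eq_zero_iff_of_nonneg (fun k _ => hd k)).mp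
      (le_antisymm hsum0 (Finset.sum_nonneg fun k _ => hd k)) k (Finset.mem_univ k)
    exact this
  intro k i j hP
  have hdk : Real.log (Θt k).det ≤ Real.log (Θ k).det := by
    have := hallzero k
    have hne := (hn k).ne'
    have : Real.log (Θt k).det - Real.log (Θ k).det = 0 := by
      rcases mul_eq_zero.mp this with h | h
      · exact absurd h hne
      · exact h
    linarith
  have heq : Θ k = Θt k := (hlog k).2 hdk
  have : Θ k i j = Θt k i j := by rw [heq]
  rw [this, hΘt]
  exact if_neg hP
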